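/- Intersecting Lipschitz Graphs: Suppose 0 ≤ σ < χ/8 < 1/8. Let F, G be m-dimensional subspaces of ℝ^n with ∠(F,G) ≥ χ, and let f : F → F⊥, g : G → G⊥ be Lipschitz with f(0) = 0 = g(0), Lip f ≤ σ, Lip g ≤ σ. Then there exist an integer j with 0 ≤ j ≤ m−1, a j-dimensional subspace X of ℝ^n, and a Lipschitz function S : X → X⊥ such that graph f ∩ graph g ⊆ graph S. In particular, the Hausdorff dimension of graph f ∩ graph g is at most m−1. -/

import Mathlib

open Metric Real Filter

noncomputable def pr {n : ℕ} (F : Submodule ℝ (EuclideanSpace ℝ (Fin n))) :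
    EuclideanSpace ℝ (Fin n) →L[ℝ] EuclideanSpace ℝ (Fin n) :=
  F.subtypeL.comp (Submodule.orthogonalProjection F)

noncomputable def graphSet {n : ℕ} (F : Submodule ℝ (EuclideanSpace ℝ (Fin n)))
    (u : F → Fᗮ) : Set (EuclideanSpace ℝ (Fin n)) :=
  Set.range fun z : F => (z : EuclideanSpace ℝ (Fin n)) + (u z : EuclideanSpace ℝ (Fin n))

noncomputable def cone {n : ℕ} (x : EuclideanSpace ℝ (Fin n)) (β : ℝ)
    (F : Submodule ℝ (EuclideanSpace ℝ (Fin n))) : Set (EuclideanSpace ℝ (Fin n)) :=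
  {z | ‖pr Fᗮ (z - x)‖ ≤ β * ‖pr F (z - x)‖}

open ContinuousLinearMap
open scoped RealInnerProductSpace ENNReal NNReal
set_option maxHeartbeats 1600000

section Helpers

variable {n : ℕ} {F G : Submodule ℝ (EuclideanSpace ℝ (Fin n))}

lemma pr_mem (x : EuclideanSpace ℝ (Fin n)) : pr F x ∈ F :=
  (Submodule.orthogonalProjection F x).2

lemma pr_eq_self {x : EuclideanSpace ℝ (Fin n)} (hx : x ∈ F) : pr F x = x := by
  exact (Submodule.starProjection_eq_self_iff (K := F)).mpr hx

lemma pr_orth_eq_zero {x : EuclideanSpace ℝ (Fin n)} (hx : x ∈ Fᗮ) : pr F x = 0 := by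
  simp [pr, Submodule.orthogonalProjectionOnto_apply_of_mem_orthogonal hx]

lemma pr_add_pr_orth (x : EuclideanSpace ℝ (Fin n)) : pr F x + pr Fᗮ x = x :=
  Submodule.starProjection_add_starProjection_orthogonal (K := F) x

lemma pr_pyth (x : EuclideanSpace ℝ (Fin n)) : ‖x‖^2 = ‖pr F x‖^2 + ‖pr Fᗮ x‖^2 := by
  have h := pr_add_pr_orth (F := F) x
  have h2 : ⟪pr F x, pr Fᗮ x⟫ = 0 :=
    Submodule.inner_right_of_mem_orthogonal (pr_mem (F := F) x) (pr_mem (F := Fᗮ) x)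
  have h3 : ‖x‖^2 = ‖pr F x + pr Fᗮ x‖^2 := by rw [h]
  rw [norm_add_sq_real, h2] at h3
  linarith

lemma norm_pr_le (x : EuclideanSpace ℝ (Fin n)) : ‖pr F x‖ ≤ ‖x‖ := by
  nlinarith [pr_pyth (F := F) x, norm_nonneg (pr F x), norm_nonneg x,
    sq_nonneg ‖pr Fᗮ x‖]

lemma pr_inner (x y : EuclideanSpace ℝ (Fin n)) : ⟪pr F x, y⟫ = ⟪x, pr F y⟫ :=
  Submodule.inner_starProjection_left_eq_right F x y

lemma pr_idem (x : EuclideanSpace ℝ (Fin n)) : pr F (pr F x) = pr F x :=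
  pr_eq_self (pr_mem x)

/-- uniqueness of orthogonal decomposition -/
lemma pr_eq_of_add {x y z : EuclideanSpace ℝ (Fin n)} (hy : y ∈ F) (hz : z ∈ Fᗮ)
    (hx : x = y + z) : pr F x = y := by
  rw [hx, map_add, pr_eq_self hy, pr_orth_eq_zero hz, add_zero]

lemma pr_isSelfAdjoint : IsSelfAdjoint (pr F) :=
  isSelfAdjoint_starProjection F

lemma norm_comp_pr_symm : ‖pr G ∘L pr Fᗮ‖ = ‖pr Fᗮ ∘L pr G‖ := by
  have h : ContinuousLinearMap.adjoint (pr Fᗮ ∘L pr G) = pr G ∘L pr Fᗮ := by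
    rw [adjoint_comp, (pr_isSelfAdjoint (F := G)).adjoint_eq,
      (pr_isSelfAdjoint (F := Fᗮ)).adjoint_eq]
  rw [← h, ContinuousLinearMap.adjoint.norm_map]

lemma norm_pr_sub_le_max :
    ‖pr F - pr G‖ ≤ max ‖pr Gᗮ ∘L pr F‖ ‖pr Fᗮ ∘L pr G‖ := by
  set M := max ‖pr Gᗮ ∘L pr F‖ ‖pr Fᗮ ∘L pr G‖ with hM
  have hM0 : 0 ≤ M := le_trans (norm_nonneg _) (le_max_left _ _)
  apply opNorm_le_bound _ hM0
  intro x
  have e1 : (pr F - pr G) x = pr Gᗮ (pr F x) - pr G (pr Fᗮ x) := by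
    have h1 := pr_add_pr_orth (F := G) (pr F x)
    have h2 : pr G x = pr G (pr F x) + pr G (pr Fᗮ x) := by
      conv_lhs => rw [← pr_add_pr_orth (F := F) x]
      rw [map_add]
    have h1' : pr Gᗮ (pr F x) = pr F x - pr G (pr F x) := eq_sub_of_add_eq' h1
    have : (pr F - pr G) x = pr F x - pr G x := rfl
    rw [this, h1', h2]
    abel
  have horth : ⟪pr Gᗮ (pr F x), pr G (pr Fᗮ x)⟫ = 0 :=
    Submodule.inner_left_of_mem_orthogonal (pr_mem _) (pr_mem _)
  have e2 : ‖(pr F - pr G) x‖^2 = ‖pr Gᗮ (pr F x)‖^2 + ‖pr G (pr Fᗮ x)‖^2 := by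
    rw [e1, norm_sub_sq_real, horth]; ring
  have b1 : ‖pr Gᗮ (pr F x)‖ ≤ M * ‖pr F x‖ := by
    have : pr Gᗮ (pr F x) = (pr Gᗮ ∘L pr F) (pr F x) := by
      simp [ContinuousLinearMap.comp_apply, pr_idem]
    rw [this]
    exact le_trans ((pr Gᗮ ∘L pr F).le_opNorm _)
      (mul_le_mul_of_nonneg_right (le_max_left _ _) (norm_nonneg _))
  have b2 : ‖pr G (pr Fᗮ x)‖ ≤ M * ‖pr Fᗮ x‖ := by
    have h3 : pr G (pr Fᗮ x) = (pr G ∘L pr Fᗮ) (pr Fᗮ x) := by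
      simp [ContinuousLinearMap.comp_apply, pr_idem]
    rw [h3]
    refine le_trans ((pr G ∘L pr Fᗮ).le_opNorm _) ?_
    have := norm_comp_pr_symm (F := F) (G := G)
    exact mul_le_mul_of_nonneg_right (this ▸ le_max_right _ _) (norm_nonneg _)
  have hx := pr_pyth (F := F) x
  have b1' := pow_le_pow_left₀ (norm_nonneg _) b1 2
  have b2' := pow_le_pow_left₀ (norm_nonneg _) b2 2
  have h4 : ‖(pr F - pr G) x‖^2 ≤ (M * ‖x‖)^2 := by
    rw [mul_pow] at b1' b2' ⊢
    nlinarith [sq_nonneg M]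
  have h5 : 0 ≤ M * ‖x‖ := mul_nonneg hM0 (norm_nonneg _)
  nlinarith [norm_nonneg ((pr F - pr G) x)]

end Helpers

section Helpers2
variable {n : ℕ} {F G : Submodule ℝ (EuclideanSpace ℝ (Fin n))}

lemma exists_max_dir (hdim : 0 < Module.finrank ℝ F) {χ : ℝ} (hχ0 : 0 < χ)
    (hA : χ ≤ ‖pr Gᗮ ∘L pr F‖) :
    ∃ e : EuclideanSpace ℝ (Fin n), e ∈ F ∧ ‖e‖ = 1 ∧
      ∀ a ∈ F, χ * |⟪a, e⟫| ≤ ‖pr Gᗮ a‖ := by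
  classical
  set P : EuclideanSpace ℝ (Fin n) →L[ℝ] EuclideanSpace ℝ (Fin n) := pr Gᗮ with hP
  -- compact sphere in F
  haveI : Nontrivial F := Module.finrank_pos_iff.mp hdim
  have hsph : (sphere (0:F) 1).Nonempty := NormedSpace.sphere_nonempty.mpr zero_le_one
  have hcomp : IsCompact (sphere (0:F) 1) := isCompact_sphere _ _
  have hcont : Continuous fun x : F => ‖P (x : EuclideanSpace ℝ (Fin n))‖ :=
    (P.continuous.comp continuous_subtype_val).norm
  obtain ⟨e₀, he₀s, hmax⟩ := hcomp.exists_isMaxOn hsph hcont.continuousOn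
  have he₀1 : ‖e₀‖ = 1 := by simpa using he₀s
  set e : EuclideanSpace ℝ (Fin n) := (e₀ : EuclideanSpace ℝ (Fin n)) with he
  have heF : e ∈ F := e₀.2
  have he1 : ‖e‖ = 1 := he₀1
  -- max property restated
  have hmax' : ∀ v : EuclideanSpace ℝ (Fin n), v ∈ F → ‖v‖ = 1 → ‖P v‖ ≤ ‖P e‖ := by
    intro v hv hv1
    have hm : (⟨v, hv⟩ : F) ∈ sphere (0:F) 1 := by
      simp only [mem_sphere_iff_norm, sub_zero]
      simpa using hv1
    simpa using isMaxOn_iff.mp hmax _ hm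
  -- scaled max property
  have hmax2 : ∀ v : EuclideanSpace ℝ (Fin n), v ∈ F → ‖P v‖ ≤ ‖P e‖ * ‖v‖ := by
    intro v hv
    rcases eq_or_ne v 0 with rfl | hv0
    · simp
    · have hnv : (0:ℝ) < ‖v‖ := norm_pos_iff.mpr hv0
      have hu : ‖v‖⁻¹ • v ∈ F := F.smul_mem _ hv
      have hu1 : ‖‖v‖⁻¹ • v‖ = 1 := by
        rw [norm_smul, norm_inv, norm_norm, inv_mul_cancel₀ hnv.ne']
      have := hmax' _ hu hu1
      rw [map_smul, norm_smul, norm_inv, norm_norm] at this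
      calc ‖P v‖ = ‖v‖ * (‖v‖⁻¹ * ‖P v‖) := by field_simp
      _ ≤ ‖v‖ * ‖P e‖ := by exact mul_le_mul_of_nonneg_left this hnv.le
      _ = ‖P e‖ * ‖v‖ := mul_comm _ _
  -- χ ≤ ‖P e‖
  have hPe : χ ≤ ‖P e‖ := by
    refine le_trans hA (opNorm_le_bound _ (norm_nonneg _) fun x => ?_)
    have : (P ∘L pr F) x = P (pr F x) := rfl
    rw [this]
    exact le_trans (hmax2 _ (pr_mem x))
      (mul_le_mul_of_nonneg_left (norm_pr_le x) (norm_nonneg _))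
  -- orthogonality of P e against P a for a ⊥ e in F
  have horth : ∀ a : EuclideanSpace ℝ (Fin n), a ∈ F → ⟪a, e⟫ = 0 → ⟪P e, P a⟫ = 0 := by
    intro a haF hae
    set c : ℝ := ⟪P e, P a⟫ with hc
    set K : ℝ := ‖P e‖^2 * ‖a‖^2 - ‖P a‖^2 with hK
    have hs : ∀ s : ℝ, 2 * s * c ≤ s^2 * K := by
      intro s
      have hvF : e + s • a ∈ F := F.add_mem heF (F.smul_mem _ haF)
      have hsa : ‖s • a‖^2 = s^2 * ‖a‖^2 := by
        rw [norm_smul, mul_pow, Real.norm_eq_abs, sq_abs]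
      have hnv : ‖e + s • a‖^2 = 1 + s^2 * ‖a‖^2 := by
        rw [norm_add_sq_real, real_inner_smul_right, real_inner_comm a e, hae, he1, hsa]; ring
      have hPsa : ‖P (s • a)‖^2 = s^2 * ‖P a‖^2 := by
        rw [map_smul, norm_smul, mul_pow, Real.norm_eq_abs, sq_abs]
      have hPv : ‖P (e + s • a)‖^2 = ‖P e‖^2 + 2*s*c + s^2 * ‖P a‖^2 := by
        rw [map_add, norm_add_sq_real, map_smul, real_inner_smul_right]
        rw [← map_smul, hPsa, ← hc]; ring
      have hineq := hmax2 _ hvF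
      have hineq2 : ‖P (e + s • a)‖^2 ≤ ‖P e‖^2 * ‖e + s • a‖^2 := by
        have := pow_le_pow_left₀ (norm_nonneg _) hineq 2
        rw [mul_pow] at this; exact this
      rw [hPv, hnv] at hineq2
      nlinarith [hineq2]
    have h1 := hs 1
    have h2 := hs (-1)
    have hK0 : (0:ℝ) ≤ K := by nlinarith
    have hcsq : c^2 ≤ 0 := by
      rcases eq_or_lt_of_le hK0 with hK0' | hKpos
      · nlinarith
      · have h3 := hs (c / K)
        have e3 : 2 * (c / K) * c - (c / K)^2 * K = c^2 / K := by
          field_simp; ring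
        have h4 : c^2 / K ≤ 0 := by rw [← e3]; linarith
        have h5 := mul_le_mul_of_nonneg_right h4 hKpos.le
        rw [div_mul_cancel₀ _ hKpos.ne', zero_mul] at h5
        linarith
    have : c^2 = 0 := le_antisymm hcsq (sq_nonneg c)
    exact sq_eq_zero_iff.mp this
  -- conclusion
  refine ⟨e, heF, he1, fun a haF => ?_⟩
  set t : ℝ := ⟪a, e⟫ with ht
  have ha' : a - t • e ∈ F := F.sub_mem haF (F.smul_mem _ heF)
  have hee : ⟪e, e⟫ = 1 := by
    rw [real_inner_self_eq_norm_sq, he1]; norm_num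
  have hae' : ⟪a - t • e, e⟫ = 0 := by
    rw [inner_sub_left, real_inner_smul_left, hee, ← ht]; ring
  have hc := horth _ ha' hae'
  have hinner : ⟪P a, P e⟫ = t * ‖P e‖^2 := by
    have hsplit : a = (a - t • e) + t • e := by abel
    calc ⟪P a, P e⟫ = ⟪P ((a - t • e) + t • e), P e⟫ := by rw [← hsplit]
    _ = ⟪P (a - t • e), P e⟫ + t * ⟪P e, P e⟫ := by
        rw [map_add, inner_add_left, map_smul, real_inner_smul_left]
    _ = t * ‖P e‖^2 := by
        have h0 : ⟪P (a - t • e), P e⟫ = 0 := by rw [real_inner_comm]; exact hc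
        rw [h0, real_inner_self_eq_norm_sq]; ring
  have hCS := abs_real_inner_le_norm (P a) (P e)
  rw [hinner, abs_mul, abs_of_nonneg (sq_nonneg ‖P e‖ : (0:ℝ) ≤ ‖P e‖^2)] at hCS
  have hPe0 : 0 < ‖P e‖ := lt_of_lt_of_le hχ0 hPe
  show χ * |t| ≤ ‖P a‖
  nlinarith [hCS, hPe, hPe0, abs_nonneg t, norm_nonneg (P a),
    mul_le_mul_of_nonneg_right hPe (abs_nonneg t)]

lemma aux {n m : ℕ} (hm : 1 ≤ m) (σ χ : ℝ) (hσ0 : 0 ≤ σ) (hσχ : σ < χ / 8)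
    (hχ : χ / 8 < 1 / 8)
    (F G : Submodule ℝ (EuclideanSpace ℝ (Fin n)))
    (hF : Module.finrank ℝ F = m)
    (f : F → Fᗮ) (g : G → Gᗮ)
    (hf : ∀ a b : F, ‖f a - f b‖ ≤ σ * ‖a - b‖)
    (hg : ∀ a b : G, ‖g a - g b‖ ≤ σ * ‖a - b‖)
    (e : EuclideanSpace ℝ (Fin n)) (heF : e ∈ F) (he1 : ‖e‖ = 1)
    (he : ∀ a ∈ F, χ * |⟪a, e⟫| ≤ ‖pr Gᗮ a‖) :
    ∃ X : Submodule ℝ (EuclideanSpace ℝ (Fin n)),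
      Module.finrank ℝ X = m - 1 ∧
      ∃ S : X → Xᗮ, (∃ K : NNReal, LipschitzWith K S) ∧
        graphSet F f ∩ graphSet G g ⊆ graphSet X S := by
  classical
  have hχ0 : 0 < χ := by linarith
  have hχ1 : χ < 1 := by linarith
  have hσ18 : σ < 1 / 8 := by linarith
  set X : Submodule ℝ (EuclideanSpace ℝ (Fin n)) := F ⊓ (ℝ ∙ e)ᗮ with hX
  have he0 : e ≠ 0 := by
    intro h; rw [h, norm_zero] at he1; norm_num at he1
  -- decomposition of elements of F
  have hmemX : ∀ a ∈ F, a - ⟪a, e⟫ • e ∈ X := by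
    intro a haF
    refine Submodule.mem_inf.mpr ⟨F.sub_mem haF (F.smul_mem _ heF), ?_⟩
    rw [Submodule.mem_orthogonal_singleton_iff_inner_right]
    rw [inner_sub_right, real_inner_smul_right, real_inner_self_eq_norm_sq, he1,
      real_inner_comm a e]
    ring
  have hsmulXperp : ∀ t : ℝ, t • e ∈ Xᗮ := by
    intro t
    have h1 : (ℝ ∙ e) ≤ Xᗮ := by
      refine le_trans (Submodule.le_orthogonal_orthogonal _) (Submodule.orthogonal_le ?_)
      exact inf_le_right
    exact h1 (Submodule.smul_mem _ _ (Submodule.mem_span_singleton_self e))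
  have hprXa : ∀ a ∈ F, pr X a = a - ⟪a, e⟫ • e := by
    intro a haF
    exact pr_eq_of_add (hmemX a haF) (hsmulXperp _) (by abel)
  -- finrank X = m - 1
  have hrank : Module.finrank ℝ X = m - 1 := by
    have hsup : (ℝ ∙ e) ⊔ X = F := by
      apply le_antisymm
      · exact sup_le ((Submodule.span_singleton_le_iff_mem _ _).mpr heF) inf_le_left
      · intro a haF
        have h1 : a = ⟪a, e⟫ • e + (a - ⟪a, e⟫ • e) := by abel
        rw [h1]
        exact Submodule.add_mem _
          (Submodule.mem_sup_left (Submodule.smul_mem _ _ (Submodule.mem_span_singleton_self e)))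
          (Submodule.mem_sup_right (hmemX a haF))
    have hinf : (ℝ ∙ e) ⊓ X = ⊥ := by
      rw [eq_bot_iff]
      intro v hv
      obtain ⟨hv1, hv2⟩ := Submodule.mem_inf.mp hv
      obtain ⟨-, hv3⟩ := Submodule.mem_inf.mp hv2
      rcases Submodule.mem_span_singleton.mp hv1 with ⟨c, rfl⟩
      have h2 : ⟪e, c • e⟫ = 0 :=
        Submodule.mem_orthogonal_singleton_iff_inner_right.mp hv3
      rw [real_inner_smul_right, real_inner_self_eq_norm_sq, he1] at h2
      have hc0 : c = 0 := by simpa using h2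
      simp [hc0]
    have hdim := Submodule.finrank_sup_add_finrank_inf_eq (ℝ ∙ e) X
    rw [hsup, hinf, hF, finrank_span_singleton he0, finrank_bot] at hdim
    omega
  -- key estimate
  set K : Set (EuclideanSpace ℝ (Fin n)) := graphSet F f ∩ graphSet G g with hK
  have key : ∀ p ∈ K, ∀ q ∈ K, ‖p - q‖ ≤ 3 * ‖pr X (p - q)‖ := by
    rintro p ⟨⟨z, hz⟩, ⟨z', hz'⟩⟩ q ⟨⟨w, hw⟩, ⟨w', hw'⟩⟩
    simp only at hz hz' hw hw'
    set d : EuclideanSpace ℝ (Fin n) := p - q with hd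
    set a : EuclideanSpace ℝ (Fin n) := (z : EuclideanSpace ℝ (Fin n)) - w with ha
    have haF : a ∈ F := F.sub_mem z.2 w.2
    have hda : d - a = ((f z : EuclideanSpace ℝ (Fin n)) - f w) := by
      rw [hd, ha, ← hz, ← hw]; abel
    have hdan : ‖d - a‖ ≤ σ * ‖a‖ := by
      rw [hda]
      have h1 : ‖((f z : EuclideanSpace ℝ (Fin n)) - f w)‖ = ‖f z - f w‖ := rfl
      have h2 : ‖a‖ = ‖z - w‖ := rfl
      rw [h1, h2]; exact hf z w
    set b : EuclideanSpace ℝ (Fin n) := (z' : EuclideanSpace ℝ (Fin n)) - w' with hb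
    have hbG : b ∈ G := G.sub_mem z'.2 w'.2
    have hdbeq : d - b = ((g z' : EuclideanSpace ℝ (Fin n)) - g w') := by
      rw [hd, hb, ← hz', ← hw']; abel
    have hdb : ‖d - b‖ ≤ σ * ‖b‖ := by
      rw [hdbeq]
      have h1 : ‖((g z' : EuclideanSpace ℝ (Fin n)) - g w')‖ = ‖g z' - g w'‖ := rfl
      have h2 : ‖b‖ = ‖z' - w'‖ := rfl
      rw [h1, h2]; exact hg z' w'
    have hdbmem : d - b ∈ Gᗮ := by
      rw [hdbeq]; exact Gᗮ.sub_mem (g z').2 (g w').2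
    have hprGd : pr G d = b := pr_eq_of_add hbG hdbmem (by abel)
    have hble : ‖b‖ ≤ ‖d‖ := by rw [← hprGd]; exact norm_pr_le d
    have hdle : ‖d‖ ≤ (1 + σ) * ‖a‖ := by
      have h4 := norm_add_le a (d - a)
      have h5 : a + (d - a) = d := by abel
      rw [h5] at h4
      nlinarith [hdan, norm_nonneg a]
    have hprGperp_d : pr Gᗮ d = d - b := by
      have h5 := pr_add_pr_orth (F := G) d
      rw [hprGd] at h5
      exact eq_sub_of_add_eq' h5
    clear_value d a b
    clear hz hz' hw hw' hda hdbeq hdbmem hb ha hd z w z' w' p q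
    have hPa : ‖pr Gᗮ a‖ ≤ σ * ‖b‖ + σ * ‖a‖ := by
      have h6 : pr Gᗮ a = pr Gᗮ d + pr Gᗮ (a - d) := by
        rw [← map_add]; congr 1; abel
      calc ‖pr Gᗮ a‖ ≤ ‖pr Gᗮ d‖ + ‖pr Gᗮ (a - d)‖ := by rw [h6]; exact norm_add_le _ _
      _ ≤ ‖d - b‖ + ‖a - d‖ := by
          rw [hprGperp_d]
          exact add_le_add le_rfl (norm_pr_le _)
      _ ≤ σ * ‖b‖ + σ * ‖a‖ := by
          rw [norm_sub_rev a d]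
          exact add_le_add hdb hdan
    -- tangential/normal split of a
    have hta : pr X a = a - ⟪a, e⟫ • e := hprXa a haF
    have hN : ‖a‖ ≤ |⟪a, e⟫| + ‖pr X a‖ := by
      have h8 := norm_add_le (⟪a, e⟫ • e) (a - ⟪a, e⟫ • e)
      have h9 : ⟪a, e⟫ • e + (a - ⟪a, e⟫ • e) = a := by abel
      rw [h9, norm_smul, Real.norm_eq_abs, he1, mul_one, ← hta] at h8
      exact h8
    have hT : χ * |⟪a, e⟫| ≤ ‖pr Gᗮ a‖ := he a haF
    have habs : (0:ℝ) ≤ |⟪a, e⟫| := abs_nonneg _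
    have hA0 : (0:ℝ) ≤ ‖pr X a‖ := norm_nonneg _
    have ha0 : (0:ℝ) ≤ ‖a‖ := norm_nonneg a
    have hb0 : (0:ℝ) ≤ ‖b‖ := norm_nonneg b
    have ht2 : |⟪a, e⟫| ≤ (1/2) * ‖pr X a‖ := by
      have h8 : χ * |⟪a, e⟫| ≤ σ * (2 + σ) * ‖a‖ := by nlinarith [hble, hdle, hPa, hT]
      have h9 : σ * (2 + σ) ≤ 17/64 * χ := by nlinarith
      have h10 : χ * |⟪a, e⟫| ≤ 17/64 * χ * (|⟪a, e⟫| + ‖pr X a‖) := by nlinarith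
      nlinarith
    have h11 : ‖pr X a‖ ≤ ‖pr X d‖ + σ * ‖a‖ := by
      have h12 : pr X a = pr X d + pr X (a - d) := by
        rw [← map_add]; congr 1; abel
      calc ‖pr X a‖ ≤ ‖pr X d‖ + ‖pr X (a - d)‖ := by rw [h12]; exact norm_add_le _ _
      _ ≤ ‖pr X d‖ + ‖a - d‖ := add_le_add le_rfl (norm_pr_le _)
      _ ≤ ‖pr X d‖ + σ * ‖a‖ := by rw [norm_sub_rev]; exact add_le_add le_rfl hdan
    have hσN : σ * ‖a‖ ≤ ‖a‖ / 8 := by nlinarith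
    have hNle : ‖a‖ ≤ (24/13) * ‖pr X d‖ := by linarith
    calc ‖d‖ ≤ (1 + σ) * ‖a‖ := hdle
    _ ≤ (9/8) * ‖a‖ := by nlinarith
    _ ≤ 3 * ‖pr X d‖ := by linarith
  -- uniqueness over projections
  have huniq : ∀ p ∈ K, ∀ q ∈ K, Submodule.orthogonalProjection X p = Submodule.orthogonalProjection X q → p = q := by
    intro p hp q hq hpq
    have h2 : pr X p = pr X q :=
      congrArg (fun v : X => (v : EuclideanSpace ℝ (Fin n))) hpq
    have h1 : pr X (p - q) = 0 := by rw [map_sub, h2, sub_self]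
    have h3 := key p hp q hq
    rw [h1, norm_zero, mul_zero] at h3
    have h4 : ‖p - q‖ = 0 := le_antisymm h3 (norm_nonneg _)
    have h5 : p - q = 0 := norm_eq_zero.mp h4
    exact sub_eq_zero.mp h5
  set A : Set X := {x : X | ∃ p ∈ K, Submodule.orthogonalProjection X p = x} with hA
  set f₀ : X → Xᗮ := fun x =>
    if h : ∃ p ∈ K, Submodule.orthogonalProjection X p = x then Submodule.orthogonalProjection Xᗮ h.choose
    else 0 with hf₀
  have hval : ∀ p ∈ K, f₀ (Submodule.orthogonalProjection X p) = Submodule.orthogonalProjection Xᗮ p := by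
    intro p hp
    have hex : ∃ q ∈ K, Submodule.orthogonalProjection X q = Submodule.orthogonalProjection X p := ⟨p, hp, rfl⟩
    rw [hf₀]
    dsimp only
    rw [dif_pos hex]
    obtain ⟨hq, hqq⟩ := hex.choose_spec
    rw [huniq _ hq _ hp hqq]
  have hlipon : LipschitzOnWith 3 f₀ A := by
    rw [lipschitzOnWith_iff_dist_le_mul]
    rintro x ⟨p, hp, rfl⟩ y ⟨q, hq, rfl⟩
    rw [hval p hp, hval q hq, Subtype.dist_eq, Subtype.dist_eq, dist_eq_norm, dist_eq_norm]
    have hl : ((Submodule.orthogonalProjection Xᗮ p : Xᗮ) : EuclideanSpace ℝ (Fin n)) -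
        ((Submodule.orthogonalProjection Xᗮ q : Xᗮ) : EuclideanSpace ℝ (Fin n)) = pr Xᗮ (p - q) := by
      rw [map_sub]; rfl
    have hr : ((Submodule.orthogonalProjection X p : X) : EuclideanSpace ℝ (Fin n)) -
        ((Submodule.orthogonalProjection X q : X) : EuclideanSpace ℝ (Fin n)) = pr X (p - q) := by
      rw [map_sub]; rfl
    rw [hl, hr]
    push_cast
    calc ‖pr Xᗮ (p - q)‖ ≤ ‖p - q‖ := norm_pr_le _
    _ ≤ 3 * ‖pr X (p - q)‖ := key p hp q hq
  obtain ⟨S, hS, hEq⟩ := hlipon.extend_finite_dimension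
  refine ⟨X, hrank, S, ⟨_, hS⟩, ?_⟩
  intro x hx
  refine ⟨Submodule.orthogonalProjection X x, ?_⟩
  show ((Submodule.orthogonalProjection X x : X) : EuclideanSpace ℝ (Fin n)) +
      (S (Submodule.orthogonalProjection X x) : EuclideanSpace ℝ (Fin n)) = x
  have hxA : (Submodule.orthogonalProjection X x) ∈ A := ⟨x, hx, rfl⟩
  rw [← hEq hxA, hval x hx]
  exact pr_add_pr_orth x


lemma dimH_graphSet_le {n : ℕ} (X : Submodule ℝ (EuclideanSpace ℝ (Fin n)))
    (S : X → Xᗮ) {K : ℝ≥0} (hS : LipschitzWith K S) :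
    dimH (graphSet X S) ≤ (Module.finrank ℝ X : ℝ≥0∞) := by
  have h1 : LipschitzWith 1 (fun z : X => (z : EuclideanSpace ℝ (Fin n))) :=
    isometry_subtype_coe.lipschitz
  have h2 : LipschitzWith (1 * K)
      (fun z : X => ((S z : Xᗮ) : EuclideanSpace ℝ (Fin n))) :=
    LipschitzWith.comp isometry_subtype_coe.lipschitz hS
  have h3 : LipschitzWith (1 + 1 * K)
      (fun z : X => (z : EuclideanSpace ℝ (Fin n)) + ((S z : Xᗮ) : EuclideanSpace ℝ (Fin n))) :=
    h1.add h2
  calc dimH (graphSet X S) ≤ dimH (Set.univ : Set X) := h3.dimH_range_le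
  _ = (Module.finrank ℝ X : ℝ≥0∞) := dimH_univ_eq_finrank X

/-- Intersecting Lipschitz Graphs: if `0 ≤ σ < χ/8 < 1/8`, `∠(F,G) ≥ χ`, and
`f, g` are `σ`-Lipschitz with `f(0) = 0 = g(0)`, then `graph f ∩ graph g` is
contained in the graph of a Lipschitz function over a `j`-plane with
`j ≤ m-1`; in particular its Hausdorff dimension is at most `m-1`. -/
theorem intersecting_lipschitz_graphs {n m : ℕ} (hm : 1 ≤ m)
    (σ χ : ℝ) (hσ0 : 0 ≤ σ) (hσχ : σ < χ / 8) (hχ : χ / 8 < 1 / 8)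
    (F G : Submodule ℝ (EuclideanSpace ℝ (Fin n)))
    (hF : Module.finrank ℝ F = m) (hG : Module.finrank ℝ G = m)
    (hang : χ ≤ ‖pr F - pr G‖)
    (f : F → Fᗮ) (g : G → Gᗮ) (hf0 : f 0 = 0) (hg0 : g 0 = 0)
    (hf : ∀ a b : F, ‖f a - f b‖ ≤ σ * ‖a - b‖)
    (hg : ∀ a b : G, ‖g a - g b‖ ≤ σ * ‖a - b‖) :
    (∃ j ≤ m - 1, ∃ X : Submodule ℝ (EuclideanSpace ℝ (Fin n)),
      Module.finrank ℝ X = j ∧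
      ∃ S : X → Xᗮ, (∃ K : NNReal, LipschitzWith K S) ∧
        graphSet F f ∩ graphSet G g ⊆ graphSet X S) ∧
    dimH (graphSet F f ∩ graphSet G g) ≤ (m - 1 : ℕ) := by
  have hχ0 : 0 < χ := by linarith
  have hmax := le_trans hang (norm_pr_sub_le_max (F := F) (G := G))
  have hXex : ∃ X : Submodule ℝ (EuclideanSpace ℝ (Fin n)),
      Module.finrank ℝ X = m - 1 ∧
      ∃ S : X → Xᗮ, (∃ K : NNReal, LipschitzWith K S) ∧
        graphSet F f ∩ graphSet G g ⊆ graphSet X S := by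
    rcases le_max_iff.mp hmax with hcase | hcase
    · obtain ⟨e, heF, he1, he⟩ := exists_max_dir (F := F) (G := G)
        (by rw [hF]; omega) hχ0 hcase
      exact aux hm σ χ hσ0 hσχ hχ F G hF f g hf hg e heF he1 he
    · obtain ⟨e, heG, he1, he⟩ := exists_max_dir (F := G) (G := F)
        (by rw [hG]; omega) hχ0 hcase
      obtain ⟨X, hrank, S, hlip, hsub⟩ :=
        aux hm σ χ hσ0 hσχ hχ G F hG g f hg hf e heG he1 he
      exact ⟨X, hrank, S, hlip, by rwa [Set.inter_comm]⟩
  obtain ⟨X, hrank, S, ⟨Kc, hS⟩, hsub⟩ := hXex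
  constructor
  · exact ⟨m - 1, le_refl _, X, hrank, S, ⟨Kc, hS⟩, hsub⟩
  · calc dimH (graphSet F f ∩ graphSet G g) ≤ dimH (graphSet X S) := dimH_mono hsub
    _ ≤ (Module.finrank ℝ X : ℝ≥0∞) := dimH_graphSet_le X S hS
    _ = ((m - 1 : ℕ) : ℝ≥0∞) := by rw [hrank]
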